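/- arXiv:1805.09179 — 2 statements merged into one kernel-verified Lean document; each statement's English description precedes it below -/
import Mathlib

section
/- Let m ≥ 2, let Δ be a flag (2m−1)-dimensional pseudomanifold, and let σ be a facet of Δ. Then for every 1 ≤ k ≤ 2m−3, a_k − b_k = Σ_{j=k+1}^{2m−1} (−1)^{j−k+1} · C(j,k) · a_j, where C(j,k) is the binomial coefficient. -/
open Finset

variable {V : Type*} [DecidableEq V]

/-- A simplicial complex on (a subset of) the vertex type `V`: a collection of
finite sets (the faces) that contains the empty set and is closed under inclusion. -/
def IsComplex (Δ : Finset (Finset V)) : Prop :=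
  ∅ ∈ Δ ∧ ∀ σ ∈ Δ, ∀ τ ⊆ σ, τ ∈ Δ

/-- The vertex set `V(Δ)` of a complex. -/
def verts (Δ : Finset (Finset V)) : Finset V := Δ.sup id

/-- The link `lk(σ,Δ) = {τ ∈ Δ : τ ∩ σ = ∅ ∧ τ ∪ σ ∈ Δ}`. -/
def link (Δ : Finset (Finset V)) (σ : Finset V) : Finset (Finset V) :=
  Δ.filter fun τ => τ ∩ σ = ∅ ∧ τ ∪ σ ∈ Δ

/-- The induced subcomplex `Δ[W] = {σ ∈ Δ : σ ⊆ W}`. -/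
def induced (Δ : Finset (Finset V)) (W : Finset V) : Finset (Finset V) :=
  Δ.filter fun σ => σ ⊆ W

/-- `fNum Δ i` is the number `f_i(Δ)` of `i`-dimensional faces of `Δ`,
i.e. of faces of cardinality `i + 1`. -/
def fNum (Δ : Finset (Finset V)) (i : ℕ) : ℕ :=
  (Δ.filter fun σ => σ.card = i + 1).card

/-- `Δ` is flag: every set of vertices all of whose two-element subsets are
faces of `Δ` is itself a face of `Δ`.  (Taking `u = v` below, this in particular
requires each member of `S` to be a vertex of `Δ`.) -/
def IsFlag (Δ : Finset (Finset V)) : Prop :=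
  ∀ S : Finset V, (∀ u ∈ S, ∀ v ∈ S, ({u, v} : Finset V) ∈ Δ) → S ∈ Δ

/-- A facet: an inclusion-maximal face. -/
def IsFacet (Δ : Finset (Finset V)) (σ : Finset V) : Prop :=
  σ ∈ Δ ∧ ∀ τ ∈ Δ, σ ⊆ τ → τ = σ

/-- A `(d-1)`-dimensional pseudomanifold: a pure `(d-1)`-dimensional complex
(all facets have cardinality `d`) in which every `(d-2)`-dimensional face
(cardinality `d-1`) is contained in exactly two facets (= faces of cardinality `d`). -/
def IsPseudomanifold (Δ : Finset (Finset V)) (d : ℕ) : Prop :=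
  IsComplex Δ ∧ (∀ σ, IsFacet Δ σ → σ.card = d) ∧
    ∀ τ ∈ Δ, τ.card = d - 1 → (Δ.filter fun σ => σ.card = d ∧ τ ⊆ σ).card = 2

/-- The 1-skeleton graph of a complex. -/
def skGraph (Δ : Finset (Finset V)) : SimpleGraph V where
  Adj u v := u ≠ v ∧ ({u, v} : Finset V) ∈ Δ
  symm := ⟨fun u v h => ⟨h.1.symm, by rw [Finset.pair_comm]; exact h.2⟩⟩
  loopless := ⟨fun u h => h.1 rfl⟩

/-- The 1-skeleton graph, restricted to the vertex set of `Δ`, is connected. -/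
def ConnOn (Δ : Finset (Finset V)) : Prop :=
  ((skGraph Δ).induce (verts Δ : Set V)).Connected

/-- A normal `(d-1)`-pseudomanifold: the 1-skeleton is connected and the
1-skeleton of the link of each face of dimension at most `d-3`
(cardinality at most `d-2`) is connected. -/
def IsNormalPseudomanifold (Δ : Finset (Finset V)) (d : ℕ) : Prop :=
  IsPseudomanifold Δ d ∧ ConnOn Δ ∧
    ∀ σ ∈ Δ, σ.card + 2 ≤ d → ConnOn (link Δ σ)

/-- A circle (cycle): a connected 1-dimensional pseudomanifold. -/
def IsCircle (Δ : Finset (Finset V)) : Prop :=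
  IsPseudomanifold Δ 2 ∧ ConnOn Δ

/-- The 0-dimensional complex consisting of two disjoint vertices. -/
def IsTwoPoints (P : Finset (Finset V)) : Prop :=
  ∃ a b : V, a ≠ b ∧ P = {∅, {a}, {b}}

/-- The join of two complexes (on disjoint vertex sets): faces `σ ∪ τ`
with `σ ∈ Δ`, `τ ∈ Γ`. -/
def join (Δ Γ : Finset (Finset V)) : Finset (Finset V) :=
  (Δ ×ˢ Γ).image fun p => p.1 ∪ p.2

/-- `Δ` is the suspension of a circle: the join of a circle with two disjoint points. -/
def IsSuspensionOfCircle (Δ : Finset (Finset V)) : Prop :=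
  ∃ C P, IsCircle C ∧ IsTwoPoints P ∧ Disjoint (verts C) (verts P) ∧ Δ = join C P

/-- Iterated join of a family of complexes. -/
def joinFam : (m : ℕ) → (Fin m → Finset (Finset V)) → Finset (Finset V)
  | 0, _ => {∅}
  | m + 1, C => join (C 0) (joinFam m fun i => C i.succ)

/-- `Δ` is the join of `m` circles (on pairwise disjoint vertex sets). -/
def IsJoinOfCircles (Δ : Finset (Finset V)) (m : ℕ) : Prop :=
  ∃ C : Fin m → Finset (Finset V), (∀ i, IsCircle (C i)) ∧
    (∀ i j, i ≠ j → Disjoint (verts (C i)) (verts (C j))) ∧ Δ = joinFam m C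

/-- `a_k = Σ_{τ ⊆ σ, |τ| = k} f₀(lk(τ,Δ))`. -/
def aNum (Δ : Finset (Finset V)) (σ : Finset V) (k : ℕ) : ℕ :=
  ∑ τ ∈ σ.powersetCard k, fNum (link Δ τ) 0

/-- `W_τ`: the vertices `w` of `lk(τ,Δ)` with `{w,u} ∉ Δ` for every `u ∈ σ \ τ`. -/
def Wset (Δ : Finset (Finset V)) (σ τ : Finset V) : Finset V :=
  (verts (link Δ τ)).filter fun w => ∀ u ∈ σ \ τ, ({w, u} : Finset V) ∉ Δ

/-- `b_k = Σ_{τ ⊆ σ, |τ| = k} |W_τ|`. -/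
def bNum (Δ : Finset (Finset V)) (σ : Finset V) (k : ℕ) : ℕ :=
  ∑ τ ∈ σ.powersetCard k, (Wset Δ σ τ).card

/-- The Euler characteristic `χ(Δ) = Σ_{i ≥ 0} (-1)^i f_i(Δ)`, computed as a sum
of `(-1)^{|σ|-1}` over the nonempty faces `σ`. -/
def eulerChar (Δ : Finset (Finset V)) : ℤ :=
  ∑ σ ∈ Δ.filter (fun σ => σ ≠ ∅), (-1 : ℤ) ^ (σ.card - 1)

/-- `Δ` is Eulerian: for every face `σ` (including `σ = ∅`, whose link is `Δ`),
`χ(lk(σ,Δ)) = 1 + (-1)^{dim lk(σ,Δ)}`; since `dim lk(σ,Δ)` is one less than the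
maximal cardinality of a face of the link, this equals `1 - (-1)^{max card}`. -/
def IsEulerian (Δ : Finset (Finset V)) : Prop :=
  ∀ σ ∈ Δ, eulerChar (link Δ σ) = 1 - (-1) ^ ((link Δ σ).sup Finset.card)


/-- neighbors of `w` inside `σ` -/
def Nbr (Δ : Finset (Finset V)) (σ : Finset V) (w : V) : Finset V :=
  σ.filter fun u => ({w, u} : Finset V) ∈ Δ

lemma Nbr_subset (Δ : Finset (Finset V)) (σ : Finset V) (w : V) :
    Nbr Δ σ w ⊆ σ := filter_subset _ _

lemma singleton_mem_verts {Δ : Finset (Finset V)} {w : V} (h : {w} ∈ Δ) :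
    w ∈ verts Δ :=
  Finset.mem_sup.2 ⟨{w}, h, Finset.mem_singleton_self w⟩

lemma singleton_mem_link_iff {Δ : Finset (Finset V)} (hC : IsComplex Δ) (hF : IsFlag Δ)
    {σ τ : Finset V} (hσ : σ ∈ Δ) (hτσ : τ ⊆ σ) (hτ : τ.Nonempty) (w : V) :
    {w} ∈ link Δ τ ↔ (w ∉ τ ∧ τ ⊆ Nbr Δ σ w) := by
  constructor
  · intro h
    simp only [link, Finset.mem_filter] at h
    obtain ⟨h1, h2, h3⟩ := h
    have hw : w ∉ τ := by
      intro hwτ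
      have : w ∈ ({w} : Finset V) ∩ τ := by simp [hwτ]
      rw [h2] at this; exact absurd this (Finset.notMem_empty w)
    refine ⟨hw, fun u hu => ?_⟩
    simp only [Nbr, Finset.mem_filter]
    refine ⟨hτσ hu, hC.2 _ h3 _ ?_⟩
    intro x hx
    rcases Finset.mem_insert.1 hx with rfl | hx
    · exact Finset.mem_union_left _ (Finset.mem_singleton_self _)
    · rw [Finset.mem_singleton] at hx; subst hx
      exact Finset.mem_union_right _ hu
  · rintro ⟨hw, hsub⟩
    have key : ∀ a ∈ insert w τ, ({w, a} : Finset V) ∈ Δ := by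
      intro a ha
      rcases Finset.mem_insert.1 ha with he | ha
      · obtain ⟨x, hx⟩ := hτ
        refine hC.2 _ ((Finset.mem_filter.1 (hsub hx)).2) _ ?_
        intro y hy
        subst he
        simp only [Finset.mem_insert, Finset.mem_singleton] at hy ⊢
        tauto
      · exact (Finset.mem_filter.1 (hsub ha)).2
    have hins : insert w τ ∈ Δ := by
      apply hF
      intro u hu v hv
      rcases Finset.mem_insert.1 hu with he | huτ
      · rw [he]; exact key v hv
      · rcases Finset.mem_insert.1 hv with he | hvτ
        · rw [he, Finset.pair_comm]
          exact key u hu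
        · refine hC.2 _ hσ _ ?_
          intro y hy
          simp only [Finset.mem_insert, Finset.mem_singleton] at hy
          rcases hy with rfl | rfl
          · exact hτσ huτ
          · exact hτσ hvτ
    simp only [link, Finset.mem_filter]
    refine ⟨hC.2 _ hins _ (by simp), ?_, ?_⟩
    · simp [Finset.singleton_inter_of_notMem hw]
    · have : ({w} : Finset V) ∪ τ = insert w τ := by
        ext y; simp
      rw [this]; exact hins

lemma mem_verts_link {Δ : Finset (Finset V)} (hC : IsComplex Δ) (τ : Finset V) (w : V) :
    w ∈ verts (link Δ τ) ↔ {w} ∈ link Δ τ := by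
  constructor
  · intro h
    obtain ⟨ρ, hρ, hwρ⟩ := Finset.mem_sup.1 h
    simp only [id] at hwρ
    simp only [link, Finset.mem_filter] at hρ ⊢
    obtain ⟨h1, h2, h3⟩ := hρ
    refine ⟨hC.2 _ h1 _ (Finset.singleton_subset_iff.2 hwρ), ?_, ?_⟩
    · have hwτ : w ∉ τ := fun hwτ => by
        have : w ∈ ρ ∩ τ := Finset.mem_inter.2 ⟨hwρ, hwτ⟩
        rw [h2] at this; exact absurd this (Finset.notMem_empty w)
      simp [Finset.singleton_inter_of_notMem hwτ]
    · exact hC.2 _ h3 _ (Finset.union_subset_union_left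
        (Finset.singleton_subset_iff.2 hwρ))
  · intro h
    exact Finset.mem_sup.2 ⟨{w}, h, Finset.mem_singleton_self w⟩

lemma fNum_link_zero {Δ : Finset (Finset V)} (hC : IsComplex Δ) (τ : Finset V) :
    fNum (link Δ τ) 0 = ((verts Δ).filter fun w => {w} ∈ link Δ τ).card := by
  unfold fNum
  rw [show ((link Δ τ).filter fun ρ => ρ.card = 0 + 1)
      = ((verts Δ).filter fun w => {w} ∈ link Δ τ).image (fun w => ({w} : Finset V)) from ?_]
  · rw [Finset.card_image_of_injective _ Finset.singleton_injective]
  · ext ρ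
    simp only [Finset.mem_filter, Finset.mem_image, zero_add, Finset.card_eq_one]
    constructor
    · rintro ⟨hρ, w, rfl⟩
      refine ⟨w, ⟨?_, hρ⟩, rfl⟩
      have : ({w} : Finset V) ∈ Δ := (Finset.mem_filter.1 hρ).1
      exact singleton_mem_verts this
    · rintro ⟨w, ⟨hw, hlk⟩, rfl⟩
      exact ⟨hlk, w, rfl⟩

lemma Wset_eq {Δ : Finset (Finset V)} (hC : IsComplex Δ) (σ τ : Finset V) :
    Wset Δ σ τ = (verts Δ).filter fun w => {w} ∈ link Δ τ ∧ Nbr Δ σ w ⊆ τ := by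
  ext w
  simp only [Wset, Finset.mem_filter, mem_verts_link hC]
  constructor
  · rintro ⟨hlk, hcond⟩
    have hwΔ : ({w} : Finset V) ∈ Δ := (Finset.mem_filter.1 hlk).1
    refine ⟨singleton_mem_verts hwΔ, hlk, fun u hu => ?_⟩
    simp only [Nbr, Finset.mem_filter] at hu
    by_contra huτ
    exact hcond u (Finset.mem_sdiff.2 ⟨hu.1, huτ⟩) hu.2
  · rintro ⟨_, hlk, hNbr⟩
    refine ⟨hlk, fun u hu hpair => ?_⟩
    rw [Finset.mem_sdiff] at hu
    exact hu.2 (hNbr (Finset.mem_filter.2 ⟨hu.1, hpair⟩))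

lemma aNum_eq {Δ : Finset (Finset V)} (hC : IsComplex Δ) (hF : IsFlag Δ)
    {σ : Finset V} (hσ : σ ∈ Δ) {j : ℕ} (hj : 1 ≤ j) :
    aNum Δ σ j = ∑ w ∈ verts Δ, ((Nbr Δ σ w \ {w}).card).choose j := by
  unfold aNum
  rw [Finset.sum_congr rfl fun τ _ => fNum_link_zero hC τ]
  simp only [Finset.card_filter]
  rw [Finset.sum_comm]
  refine Finset.sum_congr rfl fun w _ => ?_
  rw [← Finset.card_filter, ← Finset.card_powersetCard]
  congr 1
  ext τ
  simp only [Finset.mem_filter, Finset.mem_powersetCard]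
  constructor
  · rintro ⟨⟨hτσ, hcard⟩, hlk⟩
    have hne : τ.Nonempty := Finset.card_pos.1 (by omega)
    obtain ⟨hw, hNbr⟩ := (singleton_mem_link_iff hC hF hσ hτσ hne w).1 hlk
    exact ⟨Finset.subset_sdiff.2 ⟨hNbr, by simp [hw]⟩, hcard⟩
  · rintro ⟨hsub, hcard⟩
    have h1 : τ ⊆ Nbr Δ σ w := hsub.trans (Finset.sdiff_subset)
    have hτσ : τ ⊆ σ := h1.trans (Nbr_subset Δ σ w)
    have hw : w ∉ τ := fun hwτ => by simpa using hsub hwτ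
    have hne : τ.Nonempty := Finset.card_pos.1 (by omega)
    exact ⟨⟨hτσ, hcard⟩, (singleton_mem_link_iff hC hF hσ hτσ hne w).2 ⟨hw, h1⟩⟩

lemma bNum_eq {Δ : Finset (Finset V)} (hC : IsComplex Δ) (hF : IsFlag Δ)
    {σ : Finset V} (hσ : σ ∈ Δ) {k : ℕ} (hk : 1 ≤ k) :
    bNum Δ σ k = ∑ w ∈ verts Δ,
      if w ∉ Nbr Δ σ w ∧ (Nbr Δ σ w).card = k then 1 else 0 := by
  unfold bNum
  rw [Finset.sum_congr rfl fun τ _ => by rw [Wset_eq hC σ τ]]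
  simp only [Finset.card_filter]
  rw [Finset.sum_comm]
  refine Finset.sum_congr rfl fun w _ => ?_
  rw [← Finset.card_filter]
  have : (σ.powersetCard k).filter (fun τ => {w} ∈ link Δ τ ∧ Nbr Δ σ w ⊆ τ)
      = if w ∉ Nbr Δ σ w ∧ (Nbr Δ σ w).card = k then {Nbr Δ σ w} else ∅ := by
    ext τ
    simp only [Finset.mem_filter, Finset.mem_powersetCard]
    split_ifs with hcond
    · simp only [Finset.mem_singleton]
      constructor
      · rintro ⟨⟨hτσ, hcard⟩, hlk, hNτ⟩
        have hne : τ.Nonempty := Finset.card_pos.1 (by omega)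
        obtain ⟨hw, hτN⟩ := (singleton_mem_link_iff hC hF hσ hτσ hne w).1 hlk
        exact Finset.Subset.antisymm hτN hNτ
      · rintro rfl
        have hτσ : Nbr Δ σ w ⊆ σ := Nbr_subset Δ σ w
        have hne : (Nbr Δ σ w).Nonempty := Finset.card_pos.1 (by rw [hcond.2]; omega)
        exact ⟨⟨hτσ, hcond.2⟩,
          (singleton_mem_link_iff hC hF hσ hτσ hne w).2 ⟨hcond.1, Finset.Subset.refl _⟩,
          Finset.Subset.refl _⟩
    · simp only [Finset.notMem_empty, iff_false]
      rintro ⟨⟨hτσ, hcard⟩, hlk, hNτ⟩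
      have hne : τ.Nonempty := Finset.card_pos.1 (by omega)
      obtain ⟨hw, hτN⟩ := (singleton_mem_link_iff hC hF hσ hτσ hne w).1 hlk
      have heq : τ = Nbr Δ σ w := Finset.Subset.antisymm hτN hNτ
      subst heq
      exact hcond ⟨hw, hcard⟩
  rw [this]
  split_ifs <;> simp

lemma alt_sum_choose_succ {n : ℕ} (hn : n ≠ 0) :
    ∑ i ∈ Finset.range n, (-1 : ℤ) ^ i * (n.choose (i + 1)) = 1 := by
  have h := Int.alternating_sum_range_choose_of_ne hn
  rw [Finset.sum_range_succ'] at h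
  simp only [pow_succ, Nat.choose_zero_right, pow_zero, one_mul, Nat.cast_one] at h
  have e : ∑ x ∈ Finset.range n, ((-1:ℤ)^x * -1 * (n.choose (x+1):ℤ))
      = -∑ x ∈ Finset.range n, ((-1:ℤ)^x * (n.choose (x+1):ℤ)) := by
    rw [← Finset.sum_neg_distrib]
    exact Finset.sum_congr rfl fun x _ => by ring
  rw [e] at h
  linarith

lemma arith_id (c k N : ℕ) (hc : c ≤ N) :
    (c.choose k : ℤ) - (if c = k then 1 else 0) =
      ∑ j ∈ Finset.Icc (k + 1) N, (-1 : ℤ) ^ (j - k + 1) * (j.choose k) * (c.choose j) := by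
  rcases le_or_gt c k with hle | hlt
  · rw [Finset.sum_eq_zero]
    · rcases eq_or_lt_of_le hle with h | h
      · simp [h]
      · rw [if_neg h.ne, Nat.choose_eq_zero_of_lt h]; simp
    · intro j hj
      rw [Nat.choose_eq_zero_of_lt (lt_of_le_of_lt hle (Finset.mem_Icc.1 hj).1)]
      simp
  · rw [if_neg hlt.ne', sub_zero]
    rw [show Finset.Icc (k+1) N = Finset.Ico (k+1) (N+1) from (Finset.Ico_add_one_right_eq_Icc _ _).symm]
    rw [← Finset.sum_subset (Finset.Ico_subset_Ico_right (by omega) :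
        Finset.Ico (k+1) (c+1) ⊆ Finset.Ico (k+1) (N+1))
        (fun j hj hj' => by
          have hcj : c < j := by
            simp only [Finset.mem_Ico] at hj hj'
            by_contra hcon
            exact hj' ⟨hj.1, by omega⟩
          rw [Nat.choose_eq_zero_of_lt hcj]
          simp)]
    rw [Finset.sum_Ico_eq_sum_range]
    have hterm : ∀ i ∈ Finset.range (c + 1 - (k + 1)),
        (-1 : ℤ) ^ (k + 1 + i - k + 1) * ((k + 1 + i).choose k) * (c.choose (k + 1 + i))
          = (c.choose k : ℤ) * ((-1 : ℤ) ^ i * ((c - k).choose (i + 1))) := by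
      intro i hi
      simp only [Finset.mem_range] at hi
      have h1 : k + 1 + i - k + 1 = i + 2 := by omega
      have h2 : c.choose (k + 1 + i) * (k + 1 + i).choose k
          = c.choose k * (c - k).choose (k + 1 + i - k) :=
        Nat.choose_mul (by omega)
      rw [show k + 1 + i - k = i + 1 from by omega] at h2
      rw [h1]
      have : ((c.choose (k + 1 + i) * (k + 1 + i).choose k : ℕ) : ℤ)
          = ((c.choose k * (c - k).choose (i + 1) : ℕ) : ℤ) := by rw [h2]
      push_cast at this
      linear_combination ((-1:ℤ)^i) * this
    rw [Finset.sum_congr rfl hterm, ← Finset.mul_sum]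
    rw [show c + 1 - (k + 1) = c - k from by omega]
    rw [alt_sum_choose_succ (by omega)]
    ring


/-- Let `m ≥ 2`, let `Δ` be a flag `(2m-1)`-dimensional
pseudomanifold and `σ` a facet.  For every `1 ≤ k ≤ 2m - 3`:
`a_k - b_k = Σ_{j=k+1}^{2m-1} (-1)^{j-k+1} C(j,k) a_j`. -/
theorem inclusion_exclusion_a_b (m : ℕ) (hm : 2 ≤ m) (Δ : Finset (Finset V))
    (hF : IsFlag Δ) (hP : IsPseudomanifold Δ (2 * m)) (σ : Finset V)
    (hσ : IsFacet Δ σ) (k : ℕ) (hk1 : 1 ≤ k) (hk2 : k ≤ 2 * m - 3) :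
    (aNum Δ σ k : ℤ) - bNum Δ σ k =
      ∑ j ∈ Finset.Icc (k + 1) (2 * m - 1),
        (-1 : ℤ) ^ (j - k + 1) * (j.choose k) * aNum Δ σ j := by
  have hC := hP.1
  have hσΔ := hσ.1
  have hcard : σ.card = 2 * m := hP.2.1 σ hσ
  have key : ∀ w ∈ verts Δ,
      ((((Nbr Δ σ w \ {w}).card).choose k : ℤ)
        - (if w ∉ Nbr Δ σ w ∧ (Nbr Δ σ w).card = k then 1 else 0))
      = ∑ j ∈ Finset.Icc (k+1) (2*m-1),
          (-1:ℤ)^(j-k+1) * (j.choose k) * (((Nbr Δ σ w \ {w}).card).choose j) := by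
    intro w _
    by_cases hwσ : w ∈ σ
    · have hN : Nbr Δ σ w = σ := by
        apply Finset.filter_true_of_mem
        intro u hu
        refine hC.2 _ hσΔ _ ?_
        intro y hy
        simp only [Finset.mem_insert, Finset.mem_singleton] at hy
        rcases hy with rfl | rfl
        · exact hwσ
        · exact hu
      have hc : (Nbr Δ σ w \ {w}).card = 2*m - 1 := by
        rw [hN, Finset.card_sdiff_of_subset (Finset.singleton_subset_iff.2 hwσ), hcard]
        simp
      rw [hc, if_neg (by rw [hN]; exact fun h => h.1 hwσ)]
      have := arith_id (2*m-1) k (2*m-1) le_rfl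
      rw [if_neg (by omega)] at this
      exact this
    · have hwN : w ∉ Nbr Δ σ w := fun h => hwσ (Nbr_subset Δ σ w h)
      have hdiff : Nbr Δ σ w \ {w} = Nbr Δ σ w := by
        rw [← Finset.erase_eq, Finset.erase_eq_of_notMem hwN]
      have hne : Nbr Δ σ w ≠ σ := by
        intro h
        have hσne : σ.Nonempty := Finset.card_pos.1 (by omega)
        have hlk : {w} ∈ link Δ σ :=
          (singleton_mem_link_iff hC hF hσΔ (Finset.Subset.refl σ) hσne w).2
            ⟨hwσ, h.ge⟩
        have h3 := (Finset.mem_filter.1 hlk).2.2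
        have := hσ.2 _ h3 (Finset.subset_union_right)
        have : w ∈ σ := by
          rw [← this]; exact Finset.mem_union_left _ (Finset.mem_singleton_self w)
        exact hwσ this
      have hclt : (Nbr Δ σ w).card ≤ 2*m - 1 := by
        have h1 : (Nbr Δ σ w).card < σ.card :=
          Finset.card_lt_card ⟨Nbr_subset Δ σ w, fun h => hne
            (Finset.Subset.antisymm (Nbr_subset Δ σ w) h)⟩
        omega
      rw [hdiff]
      have hiff : (w ∉ Nbr Δ σ w ∧ (Nbr Δ σ w).card = k) ↔ ((Nbr Δ σ w).card = k) := by
        simp [hwN]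
      rw [if_congr hiff rfl rfl]
      exact arith_id _ k (2*m-1) hclt
  rw [aNum_eq hC hF hσΔ hk1, bNum_eq hC hF hσΔ hk1]
  push_cast
  rw [← Finset.sum_sub_distrib, Finset.sum_congr rfl key, Finset.sum_comm]
  refine Finset.sum_congr rfl fun j hj => ?_
  have hj1 : 1 ≤ j := by
    have := (Finset.mem_Icc.1 hj).1; omega
  rw [aNum_eq hC hF hσΔ hj1]
  push_cast
  rw [Finset.mul_sum]
end

section
/- Let m ≥ 2, let Δ be a flag (2m−1)-dimensional pseudomanifold with n vertices, and let σ be a facet of Δ. Then Σ_{v∈σ} f₀(lk({v},Δ)) ≤ 2(m−1)n + 4m. -/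
open Finset

variable {V : Type*} [DecidableEq V]

lemma mem_verts_of {Δ : Finset (Finset V)} {τ : Finset V} {w : V}
    (hτ : τ ∈ Δ) (hw : w ∈ τ) : w ∈ verts Δ := by
  simp only [verts, Finset.mem_sup, id]
  exact ⟨τ, hτ, hw⟩

lemma link_vertex_count (Δ : Finset (Finset V)) (hC : IsComplex Δ) (v : V) :
    fNum (link Δ {v}) 0 =
      ((verts Δ).filter fun w => w ≠ v ∧ ({w, v} : Finset V) ∈ Δ).card := by
  rw [fNum]
  apply Finset.card_bij (fun τ _ => if h : τ.Nonempty then h.choose else v)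
  · rintro τ hτ
    simp only [mem_filter, link] at hτ
    obtain ⟨⟨hτΔ, hint, hun⟩, hcard⟩ := hτ
    obtain ⟨w, hw⟩ := Finset.card_eq_one.mp hcard
    subst hw
    have hne : ({w} : Finset V).Nonempty := ⟨w, mem_singleton_self w⟩
    rw [dif_pos hne]
    have hch : hne.choose = w := by
      have := hne.choose_spec; simpa using this
    rw [hch]
    have hwv : w ≠ v := by
      intro h; subst h
      simp at hint
    have hm : ({w, v} : Finset V) ∈ Δ := by
      have : ({w} : Finset V) ∪ {v} = {w, v} := by
        ext x; simp [or_comm]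
      rwa [this] at hun
    exact mem_filter.mpr ⟨mem_verts_of hm (by simp), hwv, hm⟩
  · rintro τ₁ hτ₁ τ₂ hτ₂ h
    simp only [mem_filter] at hτ₁ hτ₂
    obtain ⟨w₁, hw₁⟩ := Finset.card_eq_one.mp hτ₁.2
    obtain ⟨w₂, hw₂⟩ := Finset.card_eq_one.mp hτ₂.2
    subst hw₁; subst hw₂
    have h1 : ({w₁} : Finset V).Nonempty := ⟨w₁, mem_singleton_self w₁⟩
    have h2 : ({w₂} : Finset V).Nonempty := ⟨w₂, mem_singleton_self w₂⟩
    rw [dif_pos h1, dif_pos h2] at h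
    have e1 : h1.choose = w₁ := by have := h1.choose_spec; simpa using this
    have e2 : h2.choose = w₂ := by have := h2.choose_spec; simpa using this
    rw [e1, e2] at h; subst h; rfl
  · rintro w hw
    simp only [mem_filter] at hw
    obtain ⟨hwV, hwv, hm⟩ := hw
    refine ⟨{w}, ?_, ?_⟩
    · simp only [mem_filter, link]
      refine ⟨⟨hC.2 _ hm _ (by simp), ?_, ?_⟩, by simp⟩
      · exact Finset.singleton_inter_of_notMem (by simpa using hwv)
      · have : ({w} : Finset V) ∪ {v} = {w, v} := by ext x; simp [or_comm]
        rwa [this]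
    · have hne : ({w} : Finset V).Nonempty := ⟨w, mem_singleton_self w⟩
      rw [dif_pos hne]
      have := hne.choose_spec; simpa using this

/-- If `w` is adjacent to everything in a face `τ` (and `τ` is nonempty, inside a flag
complex), then `insert w τ` is a face. -/
lemma flag_insert {Δ : Finset (Finset V)} (hF : IsFlag Δ) (hC : IsComplex Δ)
    {τ : Finset V} (hτ : τ ∈ Δ) (hne : τ.Nonempty) {w : V}
    (hadj : ∀ u ∈ τ, ({w, u} : Finset V) ∈ Δ) : insert w τ ∈ Δ := by
  apply hF
  intro u hu v hv
  rcases mem_insert.mp hu with hu' | hu' <;> rcases mem_insert.mp hv with hv' | hv'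
  · subst hu'; subst hv'
    obtain ⟨x, hx⟩ := hne
    exact hC.2 _ (hadj x hx) _ (by intro y hy; simp at hy ⊢; tauto)
  · subst hu'; exact hadj v hv'
  · subst hv'; rw [Finset.pair_comm]; exact hadj u hu'
  · exact hC.2 _ hτ _ (by intro y hy; simp at hy ⊢; rcases hy with rfl|rfl <;> tauto)

/-- A vertex outside a facet is non-adjacent to some vertex of the facet. -/
lemma exists_nonadj {Δ : Finset (Finset V)} (hF : IsFlag Δ) (hC : IsComplex Δ)
    {σ : Finset V} (hσ : IsFacet Δ σ) (hne : σ.Nonempty) {w : V} (hw : w ∉ σ) :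
    ∃ v ∈ σ, ({w, v} : Finset V) ∉ Δ := by
  by_contra h
  push_neg at h
  have : insert w σ ∈ Δ := flag_insert hF hC hσ.1 hne h
  have := hσ.2 _ this (subset_insert _ _)
  exact hw (this ▸ mem_insert_self w σ)

/-- At most one vertex outside the facet `σ` can be adjacent to all of `σ.erase v`. -/
lemma unique_opposite {Δ : Finset (Finset V)} {m : ℕ} (hm : 2 ≤ m)
    (hF : IsFlag Δ) (hP : IsPseudomanifold Δ (2 * m))
    {σ : Finset V} (hσ : IsFacet Δ σ) {v : V} (hv : v ∈ σ)
    {w₁ w₂ : V} (hw₁ : w₁ ∉ σ) (hw₂ : w₂ ∉ σ) (hne : w₁ ≠ w₂)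
    (h₁ : ∀ u ∈ σ.erase v, ({w₁, u} : Finset V) ∈ Δ)
    (h₂ : ∀ u ∈ σ.erase v, ({w₂, u} : Finset V) ∈ Δ) : False := by
  obtain ⟨hC, hpure, hmani⟩ := hP
  have hcard : σ.card = 2 * m := hpure σ hσ
  set τ := σ.erase v with hτdef
  have hτΔ : τ ∈ Δ := hC.2 _ hσ.1 _ (erase_subset _ _)
  have hτcard : τ.card = 2 * m - 1 := by rw [card_erase_of_mem hv, hcard]
  have hτne : τ.Nonempty := by
    rw [← card_pos, hτcard]; omega
  have key := hmani τ hτΔ hτcard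
  have hwτ : ∀ w, w ∉ σ → w ∉ τ := fun w hw hwτ => hw (erase_subset _ _ hwτ)
  have hioΔ : ∀ w, w ∉ σ → (∀ u ∈ τ, ({w, u} : Finset V) ∈ Δ) →
      insert w τ ∈ Δ ∧ (insert w τ).card = 2 * m := by
    intro w hw hadj
    refine ⟨flag_insert hF hC hτΔ hτne hadj, ?_⟩
    rw [card_insert_of_notMem (hwτ w hw), hτcard]; omega
  obtain ⟨m1, c1⟩ := hioΔ w₁ hw₁ h₁
  obtain ⟨m2, c2⟩ := hioΔ w₂ hw₂ h₂
  have hsub : ({σ, insert w₁ τ, insert w₂ τ} : Finset (Finset V)) ⊆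
      Δ.filter fun ρ => ρ.card = 2 * m ∧ τ ⊆ ρ := by
    intro ρ hρ
    simp only [mem_insert, mem_singleton] at hρ
    rcases hρ with rfl | rfl | rfl
    · exact mem_filter.mpr ⟨hσ.1, hcard, erase_subset _ _⟩
    · exact mem_filter.mpr ⟨m1, c1, subset_insert _ _⟩
    · exact mem_filter.mpr ⟨m2, c2, subset_insert _ _⟩
  have hd1 : σ ≠ insert w₁ τ := fun h => hw₁ (h ▸ mem_insert_self w₁ τ)
  have hd2 : σ ≠ insert w₂ τ := fun h => hw₂ (h ▸ mem_insert_self w₂ τ)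
  have hd3 : insert w₁ τ ≠ insert w₂ τ := by
    intro h
    have : w₂ ∈ insert w₁ τ := h ▸ mem_insert_self w₂ τ
    rcases mem_insert.mp this with h' | h'
    · exact hne h'.symm
    · exact hwτ w₂ hw₂ h'
  have h3 : ({σ, insert w₁ τ, insert w₂ τ} : Finset (Finset V)).card = 3 := by
    rw [card_insert_of_notMem (by simp [hd1, hd2]),
        card_insert_of_notMem (by simp [hd3])]
    rfl
  have := Finset.card_le_card hsub
  rw [h3, key] at this
  omega


/-- Let `m ≥ 2`, let `Δ` be a flag `(2m-1)`-dimensional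
pseudomanifold with `n` vertices and `σ` a facet.  Then
`Σ_{v ∈ σ} f₀(lk({v},Δ)) ≤ 2(m-1)n + 4m`. -/
theorem sum_of_vertex_links_le (m : ℕ) (hm : 2 ≤ m) (Δ : Finset (Finset V))
    (hF : IsFlag Δ) (hP : IsPseudomanifold Δ (2 * m)) (n : ℕ)
    (hn : (verts Δ).card = n) (σ : Finset V) (hσ : IsFacet Δ σ) :
    ∑ v ∈ σ, fNum (link Δ {v}) 0 ≤ 2 * (m - 1) * n + 4 * m := by
  classical
  have hC : IsComplex Δ := hP.1
  have hcard : σ.card = 2 * m := hP.2.1 σ hσ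
  have hσne : σ.Nonempty := by rw [← card_pos, hcard]; omega
  set c : V → ℕ := fun w => (σ.filter fun v => w ≠ v ∧ ({w, v} : Finset V) ∈ Δ).card
    with hc
  have hσsub : σ ⊆ verts Δ := fun v hv => mem_verts_of hσ.1 hv
  -- Step 1: double counting
  have hswap : ∑ v ∈ σ, fNum (link Δ {v}) 0 = ∑ w ∈ verts Δ, c w := by
    calc ∑ v ∈ σ, fNum (link Δ {v}) 0
        = ∑ v ∈ σ, ((verts Δ).filter fun w => w ≠ v ∧ ({w, v} : Finset V) ∈ Δ).card :=
          Finset.sum_congr rfl fun v _ => link_vertex_count Δ hC v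
      _ = ∑ w ∈ verts Δ, c w := by
          simp only [hc, Finset.card_filter]
          exact Finset.sum_comm
  -- bound for w ∈ σ
  have hbσ : ∀ w ∈ σ, c w ≤ 2 * m - 1 := by
    intro w hw
    have : (σ.filter fun v => w ≠ v ∧ ({w, v} : Finset V) ∈ Δ) ⊆ σ.erase w := by
      intro v hv
      rw [mem_filter] at hv
      exact mem_erase.mpr ⟨hv.2.1.symm, hv.1⟩
    calc c w ≤ (σ.erase w).card := card_le_card this
      _ = 2 * m - 1 := by rw [card_erase_of_mem hw, hcard]
  -- bound for w ∉ σ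
  have hbout : ∀ w, w ∉ σ → c w ≤ 2 * m - 1 := by
    intro w hw
    obtain ⟨v, hv, hnadj⟩ := exists_nonadj hF hC hσ hσne hw
    have : (σ.filter fun v => w ≠ v ∧ ({w, v} : Finset V) ∈ Δ) ⊆ σ.erase v := by
      intro u hu
      rw [mem_filter] at hu
      refine mem_erase.mpr ⟨?_, hu.1⟩
      rintro rfl; exact hnadj hu.2.2
    calc c w ≤ (σ.erase v).card := card_le_card this
      _ = 2 * m - 1 := by rw [card_erase_of_mem hv, hcard]
  -- the exceptional set
  set A : Finset V := (verts Δ \ σ).filter fun w => 2 * m - 1 ≤ c w with hA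
  set R : Finset V := (verts Δ \ σ).filter fun w => ¬ (2 * m - 1 ≤ c w) with hR
  -- for w ∈ A, the set of non-neighbours in σ is a singleton
  set N : V → Finset V := fun w => σ.filter fun v => ¬ (w ≠ v ∧ ({w, v} : Finset V) ∈ Δ)
    with hN
  have hNcard : ∀ w, (N w).card + c w = 2 * m := by
    intro w
    simp only [hN, hc]
    rw [Finset.filter_not, card_sdiff_of_subset (filter_subset _ _), hcard]
    have : (σ.filter fun v => w ≠ v ∧ ({w, v} : Finset V) ∈ Δ).card ≤ 2 * m :=
      le_trans (card_le_card (filter_subset _ _)) hcard.le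
    omega
  have hNone : ∀ w ∈ A, (N w).card = 1 := by
    intro w hw
    rw [hA, mem_filter, mem_sdiff] at hw
    have h1 : c w ≤ 2 * m - 1 := hbout w hw.1.2
    have h2 := hNcard w
    have h3 := hw.2
    omega
  set f : V → V := fun w => if h : (N w).Nonempty then h.choose else w with hf
  have hfmem : ∀ w ∈ A, f w ∈ N w := by
    intro w hw
    have hne : (N w).Nonempty := card_pos.mp (by rw [hNone w hw]; omega)
    rw [hf]; simp only [dif_pos hne]; exact hne.choose_spec
  have hNsing : ∀ w ∈ A, N w = {f w} := by
    intro w hw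
    obtain ⟨a, ha⟩ := card_eq_one.mp (hNone w hw)
    have := hfmem w hw
    rw [ha] at this ⊢
    rw [mem_singleton] at this
    rw [this]
  have hAcard : A.card ≤ 2 * m := by
    rw [← hcard]
    apply Finset.card_le_card_of_injOn f
    · intro w hw
      exact (mem_filter.mp (hfmem w hw)).1
    · intro w₁ hw₁ w₂ hw₂ hfe
      by_contra hne
      have hv₁ : f w₁ ∈ σ := (mem_filter.mp (hfmem w₁ hw₁)).1
      have hwo : ∀ w ∈ A, w ∉ σ := by
        intro w hw; exact (mem_sdiff.mp (mem_filter.mp hw).1).2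
      have hadj : ∀ w ∈ A, ∀ u ∈ σ.erase (f w), ({w, u} : Finset V) ∈ Δ := by
        intro w hw u hu
        rw [mem_erase] at hu
        have hnotN : u ∉ N w := by
          rw [hNsing w hw, mem_singleton]; exact hu.1
        rw [hN, mem_filter, not_and] at hnotN
        have := hnotN hu.2
        rw [not_not] at this
        exact this.2
      have h2' := hadj w₂ hw₂
      rw [← hfe] at h2'
      exact unique_opposite hm hF hP hσ hv₁ (hwo w₁ hw₁) (hwo w₂ hw₂) hne
        (hadj w₁ hw₁) h2'
  -- sum decomposition
  have hsplit : ∑ w ∈ verts Δ, c w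
      = ∑ w ∈ σ, c w + (∑ w ∈ A, c w + ∑ w ∈ R, c w) := by
    rw [← Finset.sum_sdiff hσsub, hA, hR, Finset.sum_filter_add_sum_filter_not]
    ring
  have hbσsum : ∑ w ∈ σ, c w ≤ 2 * m * (2 * m - 1) := by
    calc ∑ w ∈ σ, c w ≤ σ.card • (2 * m - 1) :=
          Finset.sum_le_card_nsmul σ c (2 * m - 1) hbσ
      _ = 2 * m * (2 * m - 1) := by rw [hcard, smul_eq_mul]
  have hbAsum : ∑ w ∈ A, c w ≤ A.card * (2 * m - 1) := by
    calc ∑ w ∈ A, c w ≤ A.card • (2 * m - 1) := by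
          apply Finset.sum_le_card_nsmul
          intro w hw
          exact hbout w (mem_sdiff.mp (mem_filter.mp hw).1).2
      _ = A.card * (2 * m - 1) := by rw [smul_eq_mul]
  have hbRsum : ∑ w ∈ R, c w ≤ R.card * (2 * m - 2) := by
    calc ∑ w ∈ R, c w ≤ R.card • (2 * m - 2) := by
          apply Finset.sum_le_card_nsmul
          intro w hw
          have := (mem_filter.mp hw).2
          omega
      _ = R.card * (2 * m - 2) := by rw [smul_eq_mul]
  have hncount : n = 2 * m + A.card + R.card := by
    have h1 : (verts Δ \ σ).card + σ.card = (verts Δ).card :=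
      Finset.card_sdiff_add_card_eq_card hσsub
    have h2 : A.card + R.card = (verts Δ \ σ).card := by
      rw [hA, hR]; exact Finset.card_filter_add_card_filter_not _
    omega
  -- final arithmetic
  obtain ⟨k, rfl⟩ : ∃ k, m = k + 2 := ⟨m - 2, by omega⟩
  have e1 : 2 * (k + 2) - 1 = 2 * k + 3 := by omega
  have e2 : 2 * (k + 2) - 2 = 2 * k + 2 := by omega
  have e3 : (k + 2) - 1 = k + 1 := by omega
  rw [hswap, hsplit, e3]
  rw [e1] at hbσsum hbAsum
  rw [e2] at hbRsum
  subst hncount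
  nlinarith [hbσsum, hbAsum, hbRsum, hAcard]
end
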